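/- Let δ > 0, v ∈ ℝ, cL ∈ ℝ with 0 < cL ≤ 1, and let k₁, k₂ ∈ ℝ be arbitrary. Set ⟨v⟩ = √(1 + v²) and v_b = v/⟨v⟩. Define the 3×3 real matrices A⁰ = [[⟨v⟩, δv/⟨v⟩, 0], [v·cL²/(⟨v⟩δ), 1/⟨v⟩, k₁], [0, 0, ⟨v⟩]] and Aʳ = [[v, δ, 0], [cL²/δ, v/⟨v⟩², k₂], [0, 0, v]]. Then A⁰ is invertible, the three real numbers λ₀ = v_b, λ₊ = (v_b + cL)/(1 + v_b·cL), λ₋ = (v_b − cL)/(1 − v_b·cL) are pairwise distinct, and the set of real eigenvalues of (A⁰)⁻¹Aʳ is exactly {λ₀, λ₊, λ₋}; equivalently, for λ ∈ ℝ, det(Aʳ − λA⁰) = 0 if and only if λ ∈ {λ₀, λ₊, λ₋}. -/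

import Mathlib

open Real Matrix

/-- The boost velocity `v_b = v/⟨v⟩`, with `⟨v⟩ = √(1 + v²)`. -/
noncomputable def boostVel (v : ℝ) : ℝ := v / Real.sqrt (1 + v ^ 2)

/-- The matrix `A⁰` of the spherically symmetric elastic system in Minkowski
spacetime. -/
noncomputable def A0mat (δ v cL k₁ : ℝ) : Matrix (Fin 3) (Fin 3) ℝ :=
  !![Real.sqrt (1 + v ^ 2), δ * v / Real.sqrt (1 + v ^ 2), 0;
     v * cL ^ 2 / (Real.sqrt (1 + v ^ 2) * δ), 1 / Real.sqrt (1 + v ^ 2), k₁;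
     0, 0, Real.sqrt (1 + v ^ 2)]

/-- The matrix `Aʳ` of the spherically symmetric elastic system in Minkowski
spacetime. -/
noncomputable def ArMat (δ v cL k₂ : ℝ) : Matrix (Fin 3) (Fin 3) ℝ :=
  !![v, δ, 0;
     cL ^ 2 / δ, v / (1 + v ^ 2), k₂;
     0, 0, v]

/-- The characteristic speeds of the spherically symmetric elastic system:
`A⁰` is invertible, the three speeds `v_b`, `(v_b ± c_L)/(1 ± v_b c_L)` are pairwise
distinct, and the real (generalized) eigenvalues of `(A⁰)⁻¹Aʳ`, i.e. the real roots of
`det(Aʳ − λA⁰) = 0`, are exactly these three speeds. -/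
theorem elastic_characteristic_speeds
    (δ v cL k₁ k₂ : ℝ) (hδ : 0 < δ) (hcL0 : 0 < cL) (hcL1 : cL ≤ 1) :
    (A0mat δ v cL k₁).det ≠ 0 ∧
    (boostVel v ≠ (boostVel v + cL) / (1 + boostVel v * cL) ∧
     boostVel v ≠ (boostVel v - cL) / (1 - boostVel v * cL) ∧
     (boostVel v + cL) / (1 + boostVel v * cL) ≠ (boostVel v - cL) / (1 - boostVel v * cL)) ∧
    spectrum ℝ ((A0mat δ v cL k₁)⁻¹ * ArMat δ v cL k₂)
      = {boostVel v, (boostVel v + cL) / (1 + boostVel v * cL),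
          (boostVel v - cL) / (1 - boostVel v * cL)} ∧
    (∀ lam : ℝ, (ArMat δ v cL k₂ - lam • A0mat δ v cL k₁).det = 0 ↔
      (lam = boostVel v ∨ lam = (boostVel v + cL) / (1 + boostVel v * cL) ∨
        lam = (boostVel v - cL) / (1 - boostVel v * cL))) := by
  have hspos : (0:ℝ) < 1 + v ^ 2 := by positivity
  have hs : 0 < Real.sqrt (1 + v ^ 2) := Real.sqrt_pos.2 hspos
  set s := Real.sqrt (1 + v ^ 2) with hs_def
  have hs2 : s ^ 2 = 1 + v ^ 2 := Real.sq_sqrt hspos.le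
  have hcL2 : cL ^ 2 ≤ 1 := by nlinarith
  have hDp : 0 < s + cL * v := by nlinarith [sq_nonneg v, sq_nonneg (cL * v)]
  have hDm : 0 < s - cL * v := by nlinarith [sq_nonneg v, sq_nonneg (cL * v)]
  -- rewrite the three speeds in polynomial form
  have e0 : boostVel v = v / s := rfl
  have h1p : 1 + boostVel v * cL = (s + cL * v) / s := by
    rw [boostVel, ← hs_def]; field_simp
  have h1m : 1 - boostVel v * cL = (s - cL * v) / s := by
    rw [boostVel, ← hs_def]; field_simp
  have eLp : (boostVel v + cL) / (1 + boostVel v * cL) = (v + cL * s) / (s + cL * v) := by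
    rw [h1p, boostVel, ← hs_def]
    rw [div_div_eq_mul_div]
    congr 1
    field_simp
  have eLm : (boostVel v - cL) / (1 - boostVel v * cL) = (v - cL * s) / (s - cL * v) := by
    rw [h1m, boostVel, ← hs_def]
    rw [div_div_eq_mul_div]
    congr 1
    field_simp
  -- determinant of A⁰
  have hdetA0 : (A0mat δ v cL k₁).det = (s ^ 2 - cL ^ 2 * v ^ 2) / s := by
    simp [A0mat, Matrix.det_fin_three, ← hs_def]
    field_simp
  have hposA0 : 0 < s ^ 2 - cL ^ 2 * v ^ 2 := by nlinarith [sq_nonneg v]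
  have hA0 : (A0mat δ v cL k₁).det ≠ 0 := by
    rw [hdetA0]; exact (div_pos hposA0 hs).ne'
  -- the characteristic determinant
  have hdet : ∀ lam : ℝ, (ArMat δ v cL k₂ - lam • A0mat δ v cL k₁).det
      = (v - lam * s) * ((v - lam * s + cL * (s - lam * v)) *
          (v - lam * s - cL * (s - lam * v))) / s ^ 2 := by
    intro lam
    simp [ArMat, A0mat, Matrix.det_fin_three, ← hs_def, ← hs2]
    field_simp
    rw [Real.sqrt_sq hs.le]; ring
  -- root characterizations
  have h0 : ∀ lam : ℝ, v - lam * s = 0 ↔ lam = v / s := by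
    intro lam
    rw [eq_div_iff hs.ne']
    constructor <;> intro h <;> linarith
  have hp : ∀ lam : ℝ, v - lam * s + cL * (s - lam * v) = 0 ↔
      lam = (v + cL * s) / (s + cL * v) := by
    intro lam
    rw [eq_div_iff hDp.ne']
    constructor <;> intro h <;> linear_combination -h
  have hm : ∀ lam : ℝ, v - lam * s - cL * (s - lam * v) = 0 ↔
      lam = (v - cL * s) / (s - cL * v) := by
    intro lam
    rw [eq_div_iff hDm.ne']
    constructor <;> intro h <;> linear_combination -h
  have hiff : ∀ lam : ℝ, (ArMat δ v cL k₂ - lam • A0mat δ v cL k₁).det = 0 ↔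
      (lam = boostVel v ∨ lam = (boostVel v + cL) / (1 + boostVel v * cL) ∨
        lam = (boostVel v - cL) / (1 - boostVel v * cL)) := by
    intro lam
    rw [hdet lam, div_eq_zero_iff, mul_eq_zero, mul_eq_zero, eLp, eLm, e0,
      h0, hp, hm]
    constructor
    · rintro ((h | (h | h)) | h)
      · exact Or.inl h
      · exact Or.inr (Or.inl h)
      · exact Or.inr (Or.inr h)
      · exact absurd h (pow_ne_zero 2 hs.ne')
    · rintro (h | h | h)
      · exact Or.inl (Or.inl h)
      · exact Or.inl (Or.inr (Or.inl h))
      · exact Or.inl (Or.inr (Or.inr h))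
  refine ⟨hA0, ⟨?_, ?_, ?_⟩, ?_, hiff⟩
  · rw [eLp, e0]
    intro h
    have h' := (div_eq_div_iff hs.ne' hDp.ne').1 h
    exact hcL0.ne' (by linear_combination -h' - cL * hs2)
  · rw [eLm, e0]
    intro h
    have h' := (div_eq_div_iff hs.ne' hDm.ne').1 h
    exact hcL0.ne' (by linear_combination h' - cL * hs2)
  · rw [eLp, eLm]
    intro h
    have h' := (div_eq_div_iff hDp.ne' hDm.ne').1 h
    exact hcL0.ne' (by linear_combination h' / 2 - cL * hs2)
  · -- spectrum
    have hunit : IsUnit (A0mat δ v cL k₁).det := isUnit_iff_ne_zero.2 hA0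
    ext lam
    rw [spectrum.mem_iff, Algebra.algebraMap_eq_smul_one]
    have hfact : lam • (1 : Matrix (Fin 3) (Fin 3) ℝ)
        - (A0mat δ v cL k₁)⁻¹ * ArMat δ v cL k₂
        = (A0mat δ v cL k₁)⁻¹ * (lam • A0mat δ v cL k₁ - ArMat δ v cL k₂) := by
      rw [Matrix.mul_sub, Matrix.mul_smul, Matrix.nonsing_inv_mul _ hunit]
    rw [hfact, Matrix.isUnit_iff_isUnit_det, Matrix.det_mul, isUnit_iff_ne_zero,
      not_ne_iff, mul_eq_zero]
    have hinv : ((A0mat δ v cL k₁)⁻¹).det ≠ 0 := by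
      rw [Matrix.det_nonsing_inv, Ring.inverse_eq_inv']
      exact inv_ne_zero hA0
    have hneg : (lam • A0mat δ v cL k₁ - ArMat δ v cL k₂).det = 0 ↔
        (ArMat δ v cL k₂ - lam • A0mat δ v cL k₁).det = 0 := by
      rw [← neg_sub (ArMat δ v cL k₂) (lam • A0mat δ v cL k₁), Matrix.det_neg]
      simp [Fintype.card_fin]
    rw [hneg, hiff lam]
    simp only [Set.mem_insert_iff, Set.mem_singleton_iff]
    exact or_iff_right hinv
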